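/- Let μ > −1 and k, j ≥ 0 be integers. If j ≥ 1 then (1−zw) ∂/∂z̄ Q^μ_{k,j}(z,w) + j z Q^μ_{k,j}(z,w) = j Q^μ_{k,j−1}(z,w), while for j = 0 the left-hand side vanishes. Moreover, (1−zw) ∂/∂z Q^μ_{k,j}(z,w) − (j+μ+1) w Q^μ_{k,j}(z,w) = −(j+μ+1) Q^μ_{k,j+1}(z,w). These are identities of bivariate polynomials in (z,w). -/

import Mathlib

noncomputable def jacobiP (α β : ℝ) (n : ℕ) : Polynomial ℝ :=
  (n.factorial : ℝ)⁻¹ •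
    ∑ k ∈ Finset.range (n + 1),
      ((n.choose k : ℝ) * ((ascPochhammer ℝ (n - k)).eval ((k : ℝ) + α + 1)) *
          ((ascPochhammer ℝ k).eval ((n : ℝ) + α + β + 1))) •
        ((Polynomial.X - 1) * Polynomial.C (2⁻¹ : ℝ)) ^ k

noncomputable def zernikeQ (μ : ℝ) (k j : ℕ) : MvPolynomial (Fin 2) ℂ :=
  if j ≤ k then
    MvPolynomial.C ((((j.factorial : ℝ) / ((ascPochhammer ℝ j).eval (μ + 1)) : ℝ) : ℂ)) *
      MvPolynomial.X 0 ^ (k - j) *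
      Polynomial.aeval (2 * MvPolynomial.X 0 * MvPolynomial.X 1 - 1)
        (jacobiP μ ((k - j : ℕ) : ℝ) j)
  else
    MvPolynomial.C ((((k.factorial : ℝ) / ((ascPochhammer ℝ k).eval (μ + 1)) : ℝ) : ℂ)) *
      MvPolynomial.X 1 ^ (j - k) *
      Polynomial.aeval (2 * MvPolynomial.X 0 * MvPolynomial.X 1 - 1)
        (jacobiP μ ((j - k : ℕ) : ℝ) k)

namespace ZAux

noncomputable def Pc (s : ℕ) (x : ℝ) : ℝ := (ascPochhammer ℝ s).eval x

lemma Pc_pos (s : ℕ) {x : ℝ} (hx : 0 < x) : 0 < Pc s x := ascPochhammer_pos s x hx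

lemma Pc_zero (x : ℝ) : Pc 0 x = 1 := by simp [Pc]

lemma Pc_add (n m : ℕ) (x : ℝ) : Pc (n + m) x = Pc n x * Pc m (x + n) := by
  rw [Pc, ← ascPochhammer_mul]
  simp [Polynomial.eval_mul, Polynomial.eval_comp, Pc]

lemma Pc_succ (n : ℕ) (x : ℝ) : Pc (n + 1) x = Pc n x * (x + n) :=
  ascPochhammer_succ_eval n x

lemma Pc_succ_left (n : ℕ) (x : ℝ) : Pc (n + 1) x = x * Pc n (x + 1) := by
  rw [Pc, ascPochhammer_succ_left]
  simp [Polynomial.eval_comp, Pc, Polynomial.eval_mul]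

/-- the coefficient ratio -/
noncomputable def rr (μ : ℝ) (b s : ℕ) : ℝ := Pc s ((b : ℝ) + μ + 1) / Pc s (μ + 1)

end ZAux
namespace ZAux

lemma Pc_ne (s : ℕ) {x : ℝ} (hx : 0 < x) : Pc s x ≠ 0 := (Pc_pos s hx).ne'

lemma rr_zero (μ : ℝ) (b : ℕ) : rr μ b 0 = 1 := by simp [rr, Pc_zero]

lemma rr_succ {μ : ℝ} (hμ : μ > -1) (b s : ℕ) :
    rr μ b (s + 1) * ((μ + 1) + s) = rr μ b s * (((b : ℝ) + μ + 1) + s) := by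
  have h1 : (0:ℝ) < μ + 1 := by linarith
  have hB : Pc s (μ + 1) ≠ 0 := Pc_ne s h1
  have hy : ((μ + 1) + (s:ℝ)) ≠ 0 := by positivity
  rw [rr, rr, Pc_succ, Pc_succ]
  field_simp

lemma rr_shift {μ : ℝ} (hμ : μ > -1) (b s : ℕ) :
    rr μ (b + 1) s * ((b : ℝ) + μ + 1) = rr μ b s * (((b : ℝ) + μ + 1) + s) := by
  have h1 : (0:ℝ) < μ + 1 := by linarith
  have hB : Pc s (μ + 1) ≠ 0 := Pc_ne s h1
  have ha := Pc_succ_left s ((b:ℝ) + μ + 1)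
  have hb := Pc_succ s ((b:ℝ) + μ + 1)
  have hc : (b:ℝ) + μ + 1 + 1 = (b:ℝ) + μ + 2 := by ring
  rw [hc] at ha
  have key : ((b:ℝ) + μ + 1) * Pc s ((b:ℝ) + μ + 2) = Pc s ((b:ℝ) + μ + 1) * (((b:ℝ) + μ + 1) + s) := by
    rw [← ha, hb]
  have hd : ((b:ℕ) + 1 : ℕ) = ((b:ℕ)+1 :ℕ) := rfl
  rw [rr, rr]
  have he : (((b + 1 : ℕ)) : ℝ) + μ + 1 = (b:ℝ) + μ + 2 := by push_cast; ring
  rw [he]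
  field_simp
  linear_combination key

end ZAux

namespace ZAux
open MvPolynomial Finset

noncomputable def U : MvPolynomial (Fin 2) ℂ := X 0 * X 1 - 1

lemma smul_eq (r : ℝ) (q : MvPolynomial (Fin 2) ℂ) : r • q = C ((r:ℂ)) * q := by
  rw [Algebra.smul_def, IsScalarTower.algebraMap_apply ℝ ℂ (MvPolynomial (Fin 2) ℂ),
    algebraMap_eq, Complex.coe_algebraMap]

lemma aeval_base : (Polynomial.aeval (2 * X 0 * X 1 - 1 : MvPolynomial (Fin 2) ℂ))
    ((Polynomial.X - 1) * Polynomial.C (2⁻¹:ℝ)) = U := by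
  rw [map_mul, map_sub, Polynomial.aeval_X, Polynomial.aeval_C,
    IsScalarTower.algebraMap_apply ℝ ℂ (MvPolynomial (Fin 2) ℂ), algebraMap_eq,
    Complex.coe_algebraMap, map_one]
  have h2 : ((2⁻¹:ℝ):ℂ) = 2⁻¹ := by norm_num
  rw [h2]
  have h3 : (2 * X 0 * X 1 - 1 - 1 : MvPolynomial (Fin 2) ℂ) = C 2 * (X 0 * X 1 - 1) := by
    rw [show (MvPolynomial.C (2:ℂ) : MvPolynomial (Fin 2) ℂ) = 2 from map_ofNat _ 2]
    ring
  rw [h3, mul_comm, ← mul_assoc, ← C_mul, U]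
  norm_num

lemma aeval_jacobiP (μ β' : ℝ) (a : ℕ) :
    Polynomial.aeval (2 * X 0 * X 1 - 1 : MvPolynomial (Fin 2) ℂ) (jacobiP μ β' a)
    = ∑ s ∈ range (a+1),
        C (((((a.factorial : ℝ))⁻¹ *
          ((a.choose s : ℝ) * Pc (a-s) ((s:ℝ) + μ + 1) * Pc s ((a:ℝ) + μ + β' + 1)) : ℝ) : ℂ))
          * U ^ s := by
  rw [jacobiP, map_smul, map_sum, smul_eq, Finset.mul_sum]
  refine Finset.sum_congr rfl fun s _ => ?_
  rw [map_smul, map_pow, aeval_base, smul_eq, ← mul_assoc, ← C_mul, ← Complex.ofReal_mul]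
  rfl

end ZAux

namespace ZAux
open MvPolynomial Finset

lemma coefficient_id {μ : ℝ} (hμ : μ > -1) (a b : ℕ) (s : ℕ) (hs : s ≤ a) :
    ((a.factorial : ℝ) / Pc a (μ+1)) *
      ((a.factorial : ℝ)⁻¹ * ((a.choose s : ℝ) * Pc (a-s) ((s:ℝ)+μ+1) * Pc s ((b:ℝ)+μ+1)))
    = (a.choose s : ℝ) * rr μ b s := by
  have h1 : (0:ℝ) < μ + 1 := by linarith
  have h2 : (0:ℝ) < μ + 1 + (s:ℝ) := by positivity
  have hsplit : Pc a (μ+1) = Pc s (μ+1) * Pc (a-s) ((μ+1) + (s:ℝ)) := by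
    rw [← Pc_add, Nat.add_sub_cancel' hs]
  have harg : (s:ℝ) + μ + 1 = (μ + 1) + (s:ℝ) := by ring
  rw [harg, hsplit, rr]
  have hf : (a.factorial : ℝ) ≠ 0 := Nat.cast_ne_zero.mpr a.factorial_ne_zero
  have hB : Pc s (μ+1) ≠ 0 := Pc_ne s h1
  have hC : Pc (a-s) ((μ+1) + (s:ℝ)) ≠ 0 := Pc_ne _ h2
  field_simp

lemma branch_eq {μ : ℝ} (hμ : μ > -1) (a b : ℕ) (hab : a ≤ b) (v : MvPolynomial (Fin 2) ℂ) :
    C ((((a.factorial : ℝ) / ((ascPochhammer ℝ a).eval (μ + 1)) : ℝ) : ℂ)) * v *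
      Polynomial.aeval (2 * X 0 * X 1 - 1) (jacobiP μ ((b - a : ℕ) : ℝ) a)
    = ∑ s ∈ range (a+1), C ((((a.choose s : ℝ) * rr μ b s : ℝ) : ℂ)) * (v * U ^ s) := by
  rw [aeval_jacobiP, Finset.mul_sum]
  refine Finset.sum_congr rfl fun s hmem => ?_
  have hs : s ≤ a := Nat.lt_succ_iff.mp (Finset.mem_range.mp hmem)
  have harg : (a:ℝ) + μ + ((b - a : ℕ) : ℝ) + 1 = (b:ℝ) + μ + 1 := by
    rw [Nat.cast_sub hab]; ring
  have hPc : (ascPochhammer ℝ a).eval (μ + 1) = Pc a (μ + 1) := rfl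
  rw [harg, ← coefficient_id hμ a b s hs, hPc]
  simp only [Complex.ofReal_mul, Complex.ofReal_inv, Complex.ofReal_div, map_mul, map_div₀]
  ring

noncomputable def cfR (μ : ℝ) (b a s : ℕ) : ℝ := (a.choose s : ℝ) * rr μ b s

lemma closed_le {μ : ℝ} (hμ : μ > -1) {k j : ℕ} (h : j ≤ k) :
    zernikeQ μ k j = ∑ s ∈ range (j+1),
      C (((cfR μ k j s : ℝ) : ℂ)) * (X 0 ^ (k-j) * U ^ s) := by
  simp only [cfR]
  rw [zernikeQ, if_pos h]
  exact branch_eq hμ j k h _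

lemma closed_gt {μ : ℝ} (hμ : μ > -1) {k j : ℕ} (h : k < j) :
    zernikeQ μ k j = ∑ s ∈ range (k+1),
      C (((cfR μ j k s : ℝ) : ℂ)) * (X 1 ^ (j-k) * U ^ s) := by
  simp only [cfR]
  rw [zernikeQ, if_neg (by omega)]
  exact branch_eq hμ k j (le_of_lt h) _

end ZAux

namespace ZAux
open MvPolynomial Finset

lemma pd1_U : pderiv (1 : Fin 2) U = X 0 := by
  simp [U, pderiv_mul, pderiv_X_self, pderiv_X_of_ne (show (0:Fin 2) ≠ 1 by decide)]

lemma pd0_U : pderiv (0 : Fin 2) U = X 1 := by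
  simp [U, pderiv_mul, pderiv_X_self, pderiv_X_of_ne (show (1:Fin 2) ≠ 0 by decide)]

lemma pd1_X0U (m s : ℕ) :
    pderiv (1 : Fin 2) (X 0 ^ m * U ^ s) = C ((s:ℂ)) * (X 0 ^ (m+1) * U ^ (s-1)) := by
  cases s with
  | zero => simp [pderiv_mul, pderiv_pow, pderiv_X_of_ne (show (0:Fin 2) ≠ 1 by decide)]
  | succ s =>
    rw [pderiv_mul, pderiv_pow, pderiv_pow, pd1_U,
      pderiv_X_of_ne (show (0:Fin 2) ≠ 1 by decide)]
    simp only [Nat.add_sub_cancel, nsmul_eq_mul, mul_zero, zero_mul, zero_add, map_natCast]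
    ring

lemma pd0_X0U (m s : ℕ) :
    pderiv (0 : Fin 2) (X 0 ^ m * U ^ s) =
      C ((m:ℂ)) * (X 0 ^ (m-1) * U ^ s) + C ((s:ℂ)) * ((X 0 ^ m * X 1) * U ^ (s-1)) := by
  rw [pderiv_mul, pderiv_pow, pderiv_pow, pd0_U, pderiv_X_self]
  cases m with
  | zero =>
    cases s with
    | zero => simp
    | succ s =>
        simp only [Nat.add_sub_cancel, nsmul_eq_mul, map_natCast, Nat.cast_zero, map_zero]
        ring
  | succ m =>
    cases s with
    | zero =>
        simp only [Nat.add_sub_cancel, nsmul_eq_mul, map_natCast, Nat.cast_zero, map_zero]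
        ring
    | succ s =>
        simp only [Nat.add_sub_cancel, nsmul_eq_mul, map_natCast]
        ring

lemma pd0_X1U (m s : ℕ) :
    pderiv (0 : Fin 2) (X 1 ^ m * U ^ s) = C ((s:ℂ)) * (X 1 ^ (m+1) * U ^ (s-1)) := by
  cases s with
  | zero => simp [pderiv_mul, pderiv_pow, pderiv_X_of_ne (show (1:Fin 2) ≠ 0 by decide)]
  | succ s =>
    rw [pderiv_mul, pderiv_pow, pderiv_pow, pd0_U,
      pderiv_X_of_ne (show (1:Fin 2) ≠ 0 by decide)]
    simp only [Nat.add_sub_cancel, nsmul_eq_mul, mul_zero, zero_mul, zero_add, map_natCast]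
    ring

lemma pd1_X1U (m s : ℕ) :
    pderiv (1 : Fin 2) (X 1 ^ m * U ^ s) =
      C ((m:ℂ)) * (X 1 ^ (m-1) * U ^ s) + C ((s:ℂ)) * ((X 1 ^ m * X 0) * U ^ (s-1)) := by
  rw [pderiv_mul, pderiv_pow, pderiv_pow, pd1_U, pderiv_X_self]
  cases m with
  | zero =>
    cases s with
    | zero => simp
    | succ s =>
        simp only [Nat.add_sub_cancel, nsmul_eq_mul, map_natCast, Nat.cast_zero, map_zero]
        ring
  | succ m =>
    cases s with
    | zero =>
        simp only [Nat.add_sub_cancel, nsmul_eq_mul, map_natCast, Nat.cast_zero, map_zero]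
        ring
    | succ s =>
        simp only [Nat.add_sub_cancel, nsmul_eq_mul, map_natCast]
        ring

end ZAux

namespace ZAux
open Finset

lemma chooseR1 (n s : ℕ) : ((s:ℝ)+1) * (n.choose (s+1) : ℝ) = (n.choose s : ℝ) * ((n:ℝ) - s) := by
  rcases le_or_gt (s+1) n with h | h
  · have hc := Nat.choose_succ_right_eq n s
    have hcast : ((n.choose (s+1) * (s+1) : ℕ) : ℝ) = ((n.choose s * (n - s) : ℕ) : ℝ) :=
      Nat.cast_inj.mpr hc
    push_cast [Nat.cast_sub (by omega : s ≤ n)] at hcast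
    linarith
  · rcases eq_or_lt_of_le (Nat.lt_succ_iff.mp h) with h2 | h2
    · subst h2
      rw [Nat.choose_succ_self, Nat.choose_self]
      push_cast
      ring
    · rw [Nat.choose_eq_zero_of_lt h2, Nat.choose_eq_zero_of_lt (by omega)]
      push_cast
      ring

-- (A)  ((j:ℝ) - s) * cfR μ k j s = j * cfR μ k (j-1) s  for j ≥ 1
lemma idA {μ : ℝ} (j s : ℕ) (hj : 1 ≤ j) (b : ℕ) :
    ((j:ℝ) - (s:ℝ)) * cfR μ b j s = (j:ℝ) * cfR μ b (j-1) s := by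
  rw [cfR, cfR]
  have key : ((j:ℝ) - (s:ℝ)) * (j.choose s : ℝ) = (j:ℝ) * ((j-1).choose s : ℝ) := by
    obtain ⟨j', rfl⟩ : ∃ j', j = j' + 1 := ⟨j - 1, by omega⟩
    have h1 := Nat.add_one_mul_choose_eq j' s
    have h2 := Nat.choose_succ_right_eq (j'+1) s
    have c1 : ((j' + 1) * j'.choose s : ℝ) = ((j'+1).choose (s+1) : ℝ) * ((s:ℝ)+1) := by
      exact_mod_cast h1
    have c2 : ((j'+1).choose (s+1) : ℝ) * ((s:ℝ)+1) = ((j'+1).choose s : ℝ) * (((j'+1) - s : ℕ) : ℝ) := by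
      exact_mod_cast h2
    simp only [Nat.add_sub_cancel]
    rcases le_or_gt s (j'+1) with hs | hs
    · rw [Nat.cast_sub hs] at c2
      push_cast at c1 c2 ⊢
      nlinarith [c1, c2]
    · rw [Nat.choose_eq_zero_of_lt hs, Nat.choose_eq_zero_of_lt (by omega : j' < s)]
      push_cast
      ring
  linear_combination rr μ b s * key

end ZAux

namespace ZAux

lemma idE {μ : ℝ} (hμ : μ > -1) (b a s : ℕ) :
    ((s:ℝ)+(b:ℝ)+μ+1) * cfR μ b a s = ((b:ℝ)+μ+1) * cfR μ (b+1) a s := by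
  rw [cfR, cfR]
  linear_combination (-(a.choose s : ℝ)) * rr_shift hμ b s

lemma idC {μ : ℝ} (hμ : μ > -1) (k j s : ℕ) :
    ((k:ℝ)+μ+(s:ℝ)+1) * cfR μ k j s + (((s:ℝ)+1)+(j:ℝ)+μ+1) * cfR μ k j (s+1)
      = ((j:ℝ)+μ+1) * cfR μ k (j+1) (s+1) := by
  have h1 : (0:ℝ) < μ + 1 := by linarith
  have hne : ((μ+1)+(s:ℝ)) ≠ 0 := by positivity
  apply mul_right_cancel₀ hne
  have hr := rr_succ hμ k s
  have hc := chooseR1 j s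
  have hcc : (((j+1).choose (s+1)) : ℝ) = (j.choose s : ℝ) + (j.choose (s+1) : ℝ) := by
    exact_mod_cast Nat.choose_succ_succ j s
  rw [cfR, cfR, cfR, hcc]
  linear_combination ((((s:ℝ)+1)+(j:ℝ)+μ+1) * (j.choose (s+1):ℝ)
      - ((j:ℝ)+μ+1) * ((j.choose s:ℝ) + (j.choose (s+1):ℝ))) * hr
    + (rr μ k s * ((k:ℝ)+μ+(s:ℝ)+1)) * hc

lemma idB {μ : ℝ} (hμ : μ > -1) (k j' s : ℕ) :
    ((k:ℝ)-(s:ℝ)) * cfR μ (j'+1) k s + (((j':ℝ)+1)-((s:ℝ)+1)) * cfR μ (j'+1) k (s+1)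
      = ((j':ℝ)+1) * cfR μ j' k (s+1) := by
  have h1 : (0:ℝ) < μ + 1 := by linarith
  have hne1 : ((μ+1)+(s:ℝ)) ≠ 0 := by positivity
  have hne2 : (((j':ℝ)+1)+μ+(s:ℝ)+1) ≠ 0 := by
    have h2 : (0:ℝ) ≤ (j':ℝ) := Nat.cast_nonneg j'
    have h3 : (0:ℝ) ≤ (s:ℝ) := Nat.cast_nonneg s
    intro hcon; nlinarith
  apply mul_right_cancel₀ hne1
  apply mul_right_cancel₀ hne2
  have hr1 := rr_succ hμ (j'+1) s
  have hr2 := rr_shift hμ j' (s+1)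
  have hc := chooseR1 k s
  rw [cfR, cfR, cfR]
  push_cast at hr1 hr2 ⊢
  linear_combination (-(((k:ℝ)-(s:ℝ)) * (k.choose s : ℝ) * ((μ+1)+(s:ℝ)))) * hr1
    + ((((j':ℝ)+1)) * (k.choose (s+1) : ℝ) * ((μ+1)+(s:ℝ))) * hr2
    + (-(rr μ (j'+1) (s+1) * ((μ+1)+(s:ℝ)) * ((μ+1)+(s:ℝ)))) * hc

end ZAux

namespace ZAux
open MvPolynomial Finset

lemma cfR_top (μ : ℝ) (b a s : ℕ) (h : a < s) : cfR μ b a s = 0 := by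
  simp [cfR, Nat.choose_eq_zero_of_lt h]

lemma hU : (1 : MvPolynomial (Fin 2) ℂ) - X 0 * X 1 = -U := by rw [U]; ring

lemma case1a {μ : ℝ} (hμ : μ > -1) {k j : ℕ} (hj : 1 ≤ j) (hjk : j ≤ k) :
    (1 - X 0 * X 1) * pderiv (1 : Fin 2) (zernikeQ μ k j) +
        C (((j : ℝ)) : ℂ) * X 0 * zernikeQ μ k j =
      C (((j : ℝ)) : ℂ) * zernikeQ μ k (j - 1) := by
  rw [closed_le hμ hjk, closed_le hμ (le_trans (Nat.sub_le j 1) hjk)]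
  rw [map_sum, Finset.mul_sum, Finset.mul_sum, Finset.mul_sum, ← Finset.sum_add_distrib]
  have hrange : j - 1 + 1 = j := by omega
  rw [hrange, Finset.sum_range_succ]
  have hm : k - (j - 1) = (k - j) + 1 := by omega
  have htop : (1 - X 0 * X 1) * (pderiv (1:Fin 2)) (C ((cfR μ k j j :ℝ):ℂ) * (X 0 ^ (k-j) * U ^ j))
      + C (((j:ℝ)):ℂ) * X 0 * (C ((cfR μ k j j :ℝ):ℂ) * (X 0 ^ (k-j) * U ^ j)) = 0 := by
    rw [pderiv_mul, pderiv_C, pd1_X0U, hU]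
    obtain ⟨t, rfl⟩ : ∃ t, j = t + 1 := ⟨j - 1, by omega⟩
    simp only [Nat.add_sub_cancel]
    simp only [Complex.ofReal_natCast, map_natCast]
    push_cast
    ring
  rw [htop, add_zero]
  refine Finset.sum_congr rfl fun s hs => ?_
  have hslt : s < j := Finset.mem_range.mp hs
  rw [pderiv_mul, pderiv_C, pd1_X0U, hU, hm]
  have hid := idA (μ := μ) j s (by omega) k
  have hid2 := congrArg (fun r : ℝ => (C ((r:ℂ)) : MvPolynomial (Fin 2) ℂ)) hid
  simp only [Complex.ofReal_mul, Complex.ofReal_sub, Complex.ofReal_add,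
    Complex.ofReal_natCast, Complex.ofReal_one,
    map_mul, map_sub, map_add, map_natCast, map_one] at hid2
  cases s with
  | zero =>
    simp only [Nat.cast_zero, map_zero, zero_mul, mul_zero, pow_zero,
      Complex.ofReal_natCast, map_natCast] at hid2 ⊢
    push_cast at hid2 ⊢
    linear_combination (X 0 ^ (k - j + 1)) * hid2
  | succ t =>
    simp only [Nat.add_sub_cancel, Complex.ofReal_natCast, map_natCast] at hid2 ⊢
    push_cast at hid2 ⊢
    linear_combination (X 0 ^ (k - j + 1) * U ^ (t+1)) * hid2

end ZAux

namespace ZAux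
open MvPolynomial Finset

lemma cfR_zero (μ : ℝ) (b a : ℕ) : cfR μ b a 0 = 1 := by simp [cfR, rr_zero]

lemma closed_ge {μ : ℝ} (hμ : μ > -1) {k j : ℕ} (h : k ≤ j) :
    zernikeQ μ k j = ∑ s ∈ range (k+1),
      C (((cfR μ j k s : ℝ) : ℂ)) * (X 1 ^ (j-k) * U ^ s) := by
  rcases eq_or_lt_of_le h with rfl | hlt
  · rw [closed_le hμ (le_refl k)]
    simp [Nat.sub_self]
  · exact closed_gt hμ hlt

lemma case0 {μ : ℝ} (hμ : μ > -1) (k : ℕ) :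
    (1 - X 0 * X 1) * pderiv (1 : Fin 2) (zernikeQ μ k 0) +
        C (((0 : ℕ) : ℝ) : ℂ) * X 0 * zernikeQ μ k 0 = 0 := by
  rw [closed_le hμ (Nat.zero_le k), Finset.sum_range_one, pderiv_mul, pderiv_C, pd1_X0U]
  simp

lemma case3bc {μ : ℝ} (hμ : μ > -1) {k j : ℕ} (hkj : k ≤ j) :
    (1 - X 0 * X 1) * pderiv (0 : Fin 2) (zernikeQ μ k j) -
        C ((((j : ℝ) + μ + 1 : ℝ)) : ℂ) * X 1 * zernikeQ μ k j =
      -(C ((((j : ℝ) + μ + 1 : ℝ)) : ℂ) * zernikeQ μ k (j + 1)) := by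
  rw [closed_ge hμ hkj, closed_gt hμ (by omega : k < j + 1)]
  rw [map_sum, Finset.mul_sum, Finset.mul_sum, Finset.mul_sum, ← Finset.sum_sub_distrib, ← Finset.sum_neg_distrib]
  refine Finset.sum_congr rfl fun s hs => ?_
  rw [pderiv_mul, pderiv_C, pd0_X1U, hU]
  have hexp : j + 1 - k = (j - k) + 1 := by omega
  rw [hexp]
  have hid := idE hμ j k s
  have hid2 := congrArg (fun r : ℝ => (C ((r:ℂ)) : MvPolynomial (Fin 2) ℂ)) hid
  simp only [Complex.ofReal_mul, Complex.ofReal_add, Complex.ofReal_natCast,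
    Complex.ofReal_one, map_mul, map_add, map_natCast, map_one] at hid2
  cases s with
  | zero =>
    simp only [Nat.cast_zero, map_zero, zero_mul, mul_zero, pow_zero,
      Complex.ofReal_natCast, map_natCast, Complex.ofReal_add, Complex.ofReal_one,
      map_add, map_one] at hid2 ⊢
    push_cast at hid2 ⊢
    linear_combination (-(X 1 ^ (j - k + 1))) * hid2
  | succ t =>
    simp only [Nat.add_sub_cancel, Complex.ofReal_natCast, map_natCast,
      Complex.ofReal_add, Complex.ofReal_one, map_add, map_one] at hid2 ⊢
    push_cast at hid2 ⊢
    linear_combination (-(X 1 ^ (j - k + 1) * U ^ (t+1))) * hid2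

end ZAux

namespace ZAux
open MvPolynomial Finset

lemma sum_shift_top {M : Type*} [AddCommGroup M] (n : ℕ) (f : ℕ → M) (h : f (n+1) = 0) :
    ∑ s ∈ range (n+1), f s = (∑ s ∈ range (n+1), f (s+1)) + f 0 := by
  have h2 := Finset.sum_range_succ f (n+1)
  rw [h, add_zero] at h2
  rw [← h2, Finset.sum_range_succ']

lemma case3a {μ : ℝ} (hμ : μ > -1) {k j : ℕ} (hjk : j < k) :
    (1 - X 0 * X 1) * pderiv (0 : Fin 2) (zernikeQ μ k j) -
        C ((((j : ℝ) + μ + 1 : ℝ)) : ℂ) * X 1 * zernikeQ μ k j =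
      -(C ((((j : ℝ) + μ + 1 : ℝ)) : ℂ) * zernikeQ μ k (j + 1)) := by
  have hL : (1 - X 0 * X 1) * pderiv (0 : Fin 2) (zernikeQ μ k j) -
        C ((((j : ℝ) + μ + 1 : ℝ)) : ℂ) * X 1 * zernikeQ μ k j
      = ∑ s ∈ range (j+1),
          (-(C ((((k:ℝ)+μ+(s:ℝ)+1 : ℝ)):ℂ) * (C ((cfR μ k j s :ℝ):ℂ) * (X 0 ^ (k-j-1) * U ^ (s+1))))
           + -(C ((((s:ℝ)+(j:ℝ)+μ+1 : ℝ)):ℂ) * (C ((cfR μ k j s :ℝ):ℂ) * (X 0 ^ (k-j-1) * U ^ s)))) := by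
    rw [closed_le hμ (le_of_lt hjk), map_sum, Finset.mul_sum, Finset.mul_sum,
      ← Finset.sum_sub_distrib]
    refine Finset.sum_congr rfl fun s hs => ?_
    rw [pderiv_mul, pderiv_C, pd0_X0U, hU]
    rw [show k - j = (k - j - 1) + 1 from by omega]
    have hc2p : (((k - j - 1) + 1 : ℕ) : MvPolynomial (Fin 2) ℂ)
        = (k : MvPolynomial (Fin 2) ℂ) - (j : ℕ) := by
      push_cast [Nat.cast_sub (show j ≤ k by omega), Nat.cast_sub (show 1 ≤ k - j by omega)]
      ring
    cases s with
    | zero =>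
      simp only [Nat.add_sub_cancel, Nat.cast_zero, map_zero, zero_mul, mul_zero, pow_zero,
        Complex.ofReal_natCast, Complex.ofReal_add, Complex.ofReal_one, Complex.ofReal_zero,
        map_natCast, map_add, map_one]
      rw [hc2p]
      simp only [U]
      push_cast
      ring
    | succ t =>
      simp only [Nat.add_sub_cancel, Complex.ofReal_natCast, Complex.ofReal_add,
        Complex.ofReal_one, map_natCast, map_add, map_one]
      rw [hc2p]
      simp only [U]
      push_cast
      ring
  rw [hL, Finset.sum_add_distrib]
  have hB0 : (fun (s : ℕ) => -(C ((((s:ℝ)+(j:ℝ)+μ+1 : ℝ)):ℂ) *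
      (C ((cfR μ k j s :ℝ):ℂ) * (X 0 ^ (k-j-1) * U ^ s)))) (j+1) = 0 := by
    simp only [cfR_top μ k j (j+1) (by omega)]
    simp
  rw [sum_shift_top j (fun (s : ℕ) => -(C ((((s:ℝ)+(j:ℝ)+μ+1 : ℝ)):ℂ) *
      (C ((cfR μ k j s :ℝ):ℂ) * (X 0 ^ (k-j-1) * U ^ s)))) hB0]
  rw [closed_le hμ (show j+1 ≤ k by omega)]
  have hneg : -(C ((((j : ℝ) + μ + 1 : ℝ)) : ℂ) * ∑ s ∈ range (j+1+1),
        C (((cfR μ k (j+1) s : ℝ) : ℂ)) * (X 0 ^ (k-(j+1)) * U ^ s))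
      = ∑ s ∈ range (j+2),
        -(C ((((j : ℝ) + μ + 1 : ℝ)) : ℂ) * (C (((cfR μ k (j+1) s : ℝ) : ℂ)) * (X 0 ^ (k-j-1) * U ^ s))) := by
    rw [show k - (j+1) = k - j - 1 from by omega, Finset.mul_sum, ← Finset.sum_neg_distrib]
  rw [hneg, Finset.sum_range_succ' (fun s => -(C ((((j : ℝ) + μ + 1 : ℝ)) : ℂ) *
      (C (((cfR μ k (j+1) s : ℝ) : ℂ)) * (X 0 ^ (k-j-1) * U ^ s)))) (j+1)]
  rw [← add_assoc, ← Finset.sum_add_distrib]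
  congr 1
  · refine Finset.sum_congr rfl fun s hs => ?_
    have hid := idC hμ k j s
    have hid2 := congrArg (fun r : ℝ => (C ((r:ℂ)) : MvPolynomial (Fin 2) ℂ)) hid
    simp only [Complex.ofReal_mul, Complex.ofReal_add, Complex.ofReal_natCast,
      Complex.ofReal_one, map_mul, map_add, map_natCast, map_one] at hid2 ⊢
    push_cast at hid2 ⊢
    linear_combination (-(X 0 ^ (k-j-1) * U ^ (s+1))) * hid2
  · simp only [cfR_zero, Nat.cast_zero, Complex.ofReal_zero, map_zero, zero_add, pow_zero,
      Complex.ofReal_one, map_one, Complex.ofReal_add, Complex.ofReal_natCast, map_add, map_natCast]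

end ZAux

namespace ZAux
open MvPolynomial Finset

lemma case1b {μ : ℝ} (hμ : μ > -1) {k j : ℕ} (hkj : k < j) :
    (1 - X 0 * X 1) * pderiv (1 : Fin 2) (zernikeQ μ k j) +
        C (((j : ℝ)) : ℂ) * X 0 * zernikeQ μ k j =
      C (((j : ℝ)) : ℂ) * zernikeQ μ k (j - 1) := by
  obtain ⟨j', rfl⟩ : ∃ j', j = j' + 1 := ⟨j - 1, by omega⟩
  have hk' : k ≤ j' := by omega
  simp only [Nat.add_sub_cancel]
  have hL : (1 - X 0 * X 1) * pderiv (1 : Fin 2) (zernikeQ μ k (j'+1)) +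
        C (((j'+1 : ℕ) : ℝ) : ℂ) * X 0 * zernikeQ μ k (j'+1)
      = ∑ s ∈ range (k+1),
          (C ((((k:ℝ)-(s:ℝ) : ℝ)):ℂ) * (C ((cfR μ (j'+1) k s :ℝ):ℂ) * (X 1 ^ (j'-k) * U ^ (s+1)))
           + C (((((j':ℝ)+1)-(s:ℝ) : ℝ)):ℂ) * (C ((cfR μ (j'+1) k s :ℝ):ℂ) * (X 1 ^ (j'-k) * U ^ s))) := by
    push_cast
    rw [closed_gt hμ hkj, map_sum, Finset.mul_sum, Finset.mul_sum,
      ← Finset.sum_add_distrib]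
    refine Finset.sum_congr rfl fun s hs => ?_
    rw [pderiv_mul, pderiv_C, pd1_X1U, hU]
    rw [show j' + 1 - k = (j' - k) + 1 from by omega]
    have hc2p : (((j' - k) + 1 : ℕ) : MvPolynomial (Fin 2) ℂ)
        = ((j' : ℕ) : MvPolynomial (Fin 2) ℂ) + 1 - (k : ℕ) := by
      push_cast [Nat.cast_sub (show k ≤ j' by omega)]
      ring
    cases s with
    | zero =>
      simp only [Nat.add_sub_cancel, Nat.cast_zero, map_zero, zero_mul, mul_zero, pow_zero,
        Complex.ofReal_natCast, Complex.ofReal_add, Complex.ofReal_one, Complex.ofReal_zero,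
        Complex.ofReal_sub, map_natCast, map_add, map_one, map_sub]
      rw [hc2p]
      simp only [U]
      push_cast
      ring
    | succ t =>
      simp only [Nat.add_sub_cancel, Complex.ofReal_natCast, Complex.ofReal_add,
        Complex.ofReal_one, Complex.ofReal_sub, map_natCast, map_add, map_one, map_sub]
      rw [hc2p]
      simp only [U]
      push_cast
      ring
  rw [hL, Finset.sum_add_distrib]
  have hA : ∑ s ∈ range (k+1),
      C ((((k:ℝ)-(s:ℝ) : ℝ)):ℂ) * (C ((cfR μ (j'+1) k s :ℝ):ℂ) * (X 1 ^ (j'-k) * U ^ (s+1)))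
      = ∑ s ∈ range k,
      C ((((k:ℝ)-(s:ℝ) : ℝ)):ℂ) * (C ((cfR μ (j'+1) k s :ℝ):ℂ) * (X 1 ^ (j'-k) * U ^ (s+1))) := by
    rw [Finset.sum_range_succ, sub_self, Complex.ofReal_zero, map_zero, zero_mul, add_zero]
  rw [hA, Finset.sum_range_succ' (fun (s : ℕ) =>
      C (((((j':ℝ)+1)-(s:ℝ) : ℝ)):ℂ) * (C ((cfR μ (j'+1) k s :ℝ):ℂ) * (X 1 ^ (j'-k) * U ^ s))) k]
  rw [closed_ge hμ hk', Finset.mul_sum,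
    Finset.sum_range_succ' (fun (s : ℕ) => C (((j'+1 : ℕ) : ℝ) : ℂ) *
      (C ((cfR μ j' k s :ℝ):ℂ) * (X 1 ^ (j'-k) * U ^ s))) k]
  rw [← add_assoc, ← Finset.sum_add_distrib]
  congr 1
  · refine Finset.sum_congr rfl fun s hs => ?_
    have hid := idB hμ k j' s
    have hid2 := congrArg (fun r : ℝ => (C ((r:ℂ)) : MvPolynomial (Fin 2) ℂ)) hid
    simp only [Complex.ofReal_mul, Complex.ofReal_add, Complex.ofReal_natCast,
      Complex.ofReal_one, Complex.ofReal_sub, map_mul, map_add, map_natCast, map_one,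
      map_sub] at hid2 ⊢
    push_cast at hid2 ⊢
    linear_combination (X 1 ^ (j'-k) * U ^ (s+1)) * hid2
  · simp only [cfR_zero, Nat.cast_zero, Complex.ofReal_zero, map_zero, sub_zero, pow_zero,
      Complex.ofReal_one, map_one, Complex.ofReal_add, Complex.ofReal_natCast, map_add,
      map_natCast]
    push_cast
    ring

end ZAux

open MvPolynomial in
theorem zernike_ladder_Z6 (μ : ℝ) (hμ : μ > -1) (k j : ℕ) :
    (1 ≤ j →
      (1 - X 0 * X 1) * pderiv (1 : Fin 2) (zernikeQ μ k j) +
          C (((j : ℝ)) : ℂ) * X 0 * zernikeQ μ k j =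
        C (((j : ℝ)) : ℂ) * zernikeQ μ k (j - 1)) ∧
    (j = 0 →
      (1 - X 0 * X 1) * pderiv (1 : Fin 2) (zernikeQ μ k j) +
          C (((j : ℝ)) : ℂ) * X 0 * zernikeQ μ k j = 0) ∧
    ((1 - X 0 * X 1) * pderiv (0 : Fin 2) (zernikeQ μ k j) -
          C ((((j : ℝ) + μ + 1 : ℝ)) : ℂ) * X 1 * zernikeQ μ k j =
        -(C ((((j : ℝ) + μ + 1 : ℝ)) : ℂ) * zernikeQ μ k (j + 1))) := by
  refine ⟨?_, ?_, ?_⟩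
  · intro hj
    rcases le_or_gt j k with h | h
    · exact ZAux.case1a hμ hj h
    · exact ZAux.case1b hμ h
  · intro h
    subst h
    exact ZAux.case0 hμ k
  · rcases lt_or_ge j k with h | h
    · exact ZAux.case3a hμ h
    · exact ZAux.case3bc hμ h
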